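/- With B_n as defined and ε_n = (H_n - 1)/(n - H_n) for n ≥ 2, the average of Π^T B_n Π over all n×n permutation matrices Π equals (1/(1+ε_n))·P_{1} + (ε_n/(1+ε_n))·I_n, where P_{1} = (1/n)·1_n 1_n^T is the projection onto the span of the all-ones vector. -/

import Mathlib

open Finset Matrix

/-- The `n`-th harmonic number `H_n = 1 + 1/2 + ⋯ + 1/n`. -/
noncomputable def harmonic' (n : ℕ) : ℝ := ∑ j ∈ Finset.range n, (1 : ℝ) / (j + 1)

/-- `ε_n = (H_n - 1)/(n - H_n)`. -/
noncomputable def epsN (n : ℕ) : ℝ := (harmonic' n - 1) / ((n : ℝ) - harmonic' n)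

/-- The lower-averaging matrix `B_n`: (1-based) entry `(i,j)` equals `1/(n+1-i)` for `j ≥ i`,
and `0` otherwise. -/
noncomputable def lowerAvg (n : ℕ) : Matrix (Fin n) (Fin n) ℝ :=
  Matrix.of fun i j => if i ≤ j then (1 : ℝ) / ((n : ℝ) - (i : ℕ)) else 0

/-- The permutation matrix of `σ`: entry `(i,j)` is `1` if `σ j = i`. -/
def permMatrix {n : ℕ} (σ : Equiv.Perm (Fin n)) : Matrix (Fin n) (Fin n) ℝ :=
  Matrix.of fun i j => if σ j = i then (1 : ℝ) else 0

/-- The average of `Πᵀ Bₙ Π` over all permutation matrices `Π` equals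
`(1/(1+εₙ)) • P₁ + (εₙ/(1+εₙ)) • I`, where `P₁ = (1/n)·1ₙ1ₙᵀ`. -/
lemma conj_apply {n : ℕ} (σ : Equiv.Perm (Fin n)) (i j : Fin n) :
    ((permMatrix σ)ᵀ * lowerAvg n * permMatrix σ) i j = lowerAvg n (σ i) (σ j) := by
  simp [Matrix.mul_apply, permMatrix, Matrix.transpose_apply, mul_ite, ite_mul,
    Finset.sum_ite_eq, Finset.sum_ite_eq']

lemma trace_B {n : ℕ} : ∑ k : Fin n, lowerAvg n k k = harmonic' n := by
  have h1 : ∑ k : Fin n, lowerAvg n k k = ∑ k ∈ Finset.range n, (1:ℝ) / ((n:ℝ) - k) := by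
    simp only [lowerAvg, Matrix.of_apply, le_refl, if_true]
    exact Fin.sum_univ_eq_sum_range (fun k => (1:ℝ) / ((n:ℝ) - k)) n
  rw [h1, harmonic', ← Finset.sum_range_reflect]
  apply Finset.sum_congr rfl
  intro j hj
  rw [Finset.mem_range] at hj
  have h2 : ((n - 1 - j : ℕ) : ℝ) = (n:ℝ) - 1 - j := by
    have h3 : j + 1 ≤ n := hj
    rw [Nat.sub_sub]
    have : ((n - (1+j) : ℕ) : ℝ) = (n:ℝ) - (1+j) := by
      have : 1 + j ≤ n := by omega
      push_cast [this]; ring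
    rw [this]; ring
  rw [h2]; ring_nf

lemma rowsum_B {n : ℕ} (k : Fin n) : ∑ l : Fin n, lowerAvg n k l = 1 := by
  have hk : (k:ℕ) < n := k.isLt
  have hne : (n:ℝ) - (k:ℕ) ≠ 0 := by
    have : ((k:ℕ):ℝ) < n := by exact_mod_cast hk
    linarith
  have hfilt : (Finset.univ.filter (fun l => k ≤ l)) = Finset.Ici k := by
    ext l; simp
  have h : ∑ l : Fin n, lowerAvg n k l = (Finset.Ici k).card * ((1:ℝ) / ((n:ℝ) - k)) := by
    simp only [lowerAvg, Matrix.of_apply]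
    rw [← Finset.sum_filter, hfilt, Finset.sum_const, nsmul_eq_mul]
  rw [h, Fin.card_Ici]
  have : ((n - (k:ℕ) : ℕ) : ℝ) = (n:ℝ) - k := by push_cast [Nat.le_of_lt hk]; ring
  rw [this]
  field_simp

lemma F_shift {n : ℕ} (τ : Equiv.Perm (Fin n)) (i j : Fin n) :
    ∑ σ : Equiv.Perm (Fin n), lowerAvg n (σ (τ i)) (σ (τ j)) =
    ∑ σ : Equiv.Perm (Fin n), lowerAvg n (σ i) (σ j) := by
  rw [← Equiv.sum_comp (Equiv.mulRight τ) (fun σ : Equiv.Perm (Fin n) => lowerAvg n (σ i) (σ j))]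
  simp [Equiv.Perm.mul_apply]

lemma exists_perm {n : ℕ} {i j k l : Fin n} (hij : i ≠ j) (hkl : k ≠ l) :
    ∃ τ : Equiv.Perm (Fin n), τ i = k ∧ τ j = l := by
  refine ⟨Equiv.swap (Equiv.swap i k j) l * Equiv.swap i k, ?_, ?_⟩
  · have h1 : Equiv.swap i k j ≠ k := by
      rcases eq_or_ne j k with rfl | h
      · rw [Equiv.swap_apply_right]
        rintro rfl; exact hij rfl
      · rwa [Equiv.swap_apply_of_ne_of_ne (Ne.symm hij) h]
    simp only [Equiv.Perm.mul_apply, Equiv.swap_apply_left]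
    exact Equiv.swap_apply_of_ne_of_ne (Ne.symm h1) hkl
  · simp [Equiv.Perm.mul_apply, Equiv.swap_apply_left]

lemma sum_F_diag {n : ℕ} :
    ∑ k : Fin n, ∑ σ : Equiv.Perm (Fin n), lowerAvg n (σ k) (σ k)
      = (n.factorial : ℝ) * harmonic' n := by
  rw [Finset.sum_comm]
  have h : ∀ σ : Equiv.Perm (Fin n), ∑ k : Fin n, lowerAvg n (σ k) (σ k) = harmonic' n := by
    intro σ
    rw [Equiv.sum_comp σ (fun k => lowerAvg n k k), trace_B]
  simp [h, Finset.sum_const, Fintype.card_perm, Fintype.card_fin, mul_comm]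

lemma sum_F_all {n : ℕ} :
    ∑ k : Fin n, ∑ l : Fin n, ∑ σ : Equiv.Perm (Fin n), lowerAvg n (σ k) (σ l)
      = (n.factorial : ℝ) * n := by
  have hswap : ∑ k : Fin n, ∑ l : Fin n, ∑ σ : Equiv.Perm (Fin n), lowerAvg n (σ k) (σ l)
      = ∑ σ : Equiv.Perm (Fin n), ∑ k : Fin n, ∑ l : Fin n, lowerAvg n (σ k) (σ l) := by
    rw [Finset.sum_congr rfl (fun k _ => Finset.sum_comm), Finset.sum_comm]
  rw [hswap]
  have h : ∀ σ : Equiv.Perm (Fin n), ∑ k : Fin n, ∑ l : Fin n, lowerAvg n (σ k) (σ l) = n := by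
    intro σ
    have hin : ∀ m : Fin n, ∑ l : Fin n, lowerAvg n m (σ l) = 1 := by
      intro m
      rw [Equiv.sum_comp σ (fun l => lowerAvg n m l), rowsum_B]
    rw [Equiv.sum_comp σ (fun k => ∑ l : Fin n, lowerAvg n k (σ l))]
    simp [hin]
  simp [h, Finset.sum_const, Fintype.card_perm, Fintype.card_fin, mul_comm]

lemma harmonic_ge_one {n : ℕ} (hn : 1 ≤ n) : 1 ≤ harmonic' n := by
  have h0 : (0:ℕ) ∈ Finset.range n := by simp; omega
  have := Finset.single_le_sum (f := fun j : ℕ => (1:ℝ)/(j+1))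
    (fun i _ => by positivity) h0
  simpa [harmonic'] using this

lemma harmonic_lt {n : ℕ} (hn : 2 ≤ n) : harmonic' n < n := by
  have h1 : (1:ℕ) ∈ Finset.range n := by simp; omega
  have := Finset.sum_lt_sum (s := Finset.range n)
    (f := fun j : ℕ => (1:ℝ)/(j+1)) (g := fun _ => (1:ℝ))
    (fun i _ => by
      rw [div_le_one (by positivity)]
      linarith [Nat.cast_nonneg (α := ℝ) i])
    ⟨1, h1, by norm_num⟩
  simpa [harmonic'] using this

theorem perm_average_lowerAvg (n : ℕ) (hn : 2 ≤ n) :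
    ((n.factorial : ℝ))⁻¹ •
        ∑ σ : Equiv.Perm (Fin n), (permMatrix σ)ᵀ * lowerAvg n * permMatrix σ =
      (1 / (1 + epsN n)) • ((n : ℝ))⁻¹ • (Matrix.of fun _ _ => (1 : ℝ)) +
        (epsN n / (1 + epsN n)) • (1 : Matrix (Fin n) (Fin n) ℝ) := by
  set a := harmonic' n with ha
  have ha1 : 1 ≤ a := harmonic_ge_one (by omega)
  have han : a < n := harmonic_lt hn
  have hn2 : (2:ℝ) ≤ n := by exact_mod_cast hn
  have hn0 : (n:ℝ) ≠ 0 := by linarith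
  have hn1 : (n:ℝ) - 1 ≠ 0 := by linarith
  have hna : (n:ℝ) - a ≠ 0 := by linarith
  have hfac : (n.factorial : ℝ) ≠ 0 := by
    exact_mod_cast n.factorial_ne_zero
  have heps : 1 + epsN n = ((n:ℝ) - 1) / ((n:ℝ) - a) := by
    rw [epsN, ← ha]
    field_simp
    ring
  have heps0 : epsN n = (a - 1) / ((n:ℝ) - a) := by rw [epsN, ← ha]
  -- value of F on the diagonal
  have hdiag : ∀ i : Fin n,
      ∑ σ : Equiv.Perm (Fin n), lowerAvg n (σ i) (σ i) = (n.factorial : ℝ) * a / n := by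
    intro i
    have hconst : ∀ k : Fin n,
        ∑ σ : Equiv.Perm (Fin n), lowerAvg n (σ k) (σ k)
          = ∑ σ : Equiv.Perm (Fin n), lowerAvg n (σ i) (σ i) := by
      intro k
      have := F_shift (Equiv.swap i k) i i
      rwa [Equiv.swap_apply_left] at this
    have hsum : ∑ k : Fin n, ∑ σ : Equiv.Perm (Fin n), lowerAvg n (σ k) (σ k)
        = (n : ℝ) * ∑ σ : Equiv.Perm (Fin n), lowerAvg n (σ i) (σ i) := by
      rw [Finset.sum_congr rfl (fun k _ => hconst k), Finset.sum_const, nsmul_eq_mul,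
        Finset.card_univ, Fintype.card_fin]
    rw [sum_F_diag] at hsum
    field_simp
    linarith [hsum]
  -- value of F off the diagonal
  have hoff : ∀ i j : Fin n, i ≠ j →
      ∑ σ : Equiv.Perm (Fin n), lowerAvg n (σ i) (σ j)
        = (n.factorial : ℝ) * ((n:ℝ) - a) / ((n:ℝ) * ((n:ℝ) - 1)) := by
    intro i j hij
    set Fij := ∑ σ : Equiv.Perm (Fin n), lowerAvg n (σ i) (σ j) with hF
    have hconst : ∀ k l : Fin n, k ≠ l →
        ∑ σ : Equiv.Perm (Fin n), lowerAvg n (σ k) (σ l) = Fij := by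
      intro k l hkl
      obtain ⟨τ, hk, hl⟩ := exists_perm hij hkl
      have := F_shift τ i j
      rwa [hk, hl] at this
    have hrow : ∀ k : Fin n,
        ∑ l : Fin n, ∑ σ : Equiv.Perm (Fin n), lowerAvg n (σ k) (σ l)
          = (∑ σ : Equiv.Perm (Fin n), lowerAvg n (σ k) (σ k)) + ((n:ℝ) - 1) * Fij := by
      intro k
      rw [← Finset.add_sum_erase _ _ (Finset.mem_univ k)]
      congr 1
      rw [Finset.sum_congr rfl
        (fun l hl => hconst k l (Ne.symm (Finset.mem_erase.mp hl).1)),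
        Finset.sum_const, nsmul_eq_mul, Finset.card_erase_of_mem (Finset.mem_univ k),
        Finset.card_univ, Fintype.card_fin]
      have : ((n - 1 : ℕ) : ℝ) = (n:ℝ) - 1 := by
        have : 1 ≤ n := by omega
        push_cast [this]; ring
      rw [this]
    have htot : (n.factorial : ℝ) * n
        = (n.factorial : ℝ) * a + (n:ℝ) * (((n:ℝ) - 1) * Fij) := by
      rw [← sum_F_all, Finset.sum_congr rfl (fun k _ => hrow k), Finset.sum_add_distrib,
        sum_F_diag, Finset.sum_const, nsmul_eq_mul, Finset.card_univ, Fintype.card_fin]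
    have hmul : (n:ℝ) * ((n:ℝ) - 1) ≠ 0 := mul_ne_zero hn0 hn1
    field_simp
    linarith [htot]
  -- entrywise
  ext i j
  simp only [Matrix.smul_apply, Matrix.sum_apply, Matrix.add_apply, Matrix.one_apply,
    Matrix.of_apply, smul_eq_mul]
  rw [Finset.sum_congr rfl (fun σ _ => conj_apply σ i j)]
  by_cases hij : i = j
  · subst hij
    rw [hdiag i, heps, heps0, if_pos rfl]
    field_simp
    ring
  · rw [hoff i j hij, heps, if_neg hij]
    field_simp
    ring
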